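/- For the standardized Student t density g(z; ν) with ν > 0, the scale Fisher information integral satisfies ∫_ℝ z² ((∂g/∂z)(z; ν))² / g(z; ν) dz + 2 ∫_ℝ z (∂g/∂z)(z; ν) dz + 1 = 2ν / (ν + 3). -/

import Mathlib

open MeasureTheory

/-- The density of the standardized Student `t`-distribution with `ν` degrees of
freedom: `g(z;ν) = Γ((ν+1)/2)/(√(νπ) Γ(ν/2)) (1 + z²/ν)^{−(ν+1)/2}`. -/
noncomputable def studentPdf (ν z : ℝ) : ℝ :=
  Real.Gamma ((ν + 1) / 2) / (Real.sqrt (ν * Real.pi) * Real.Gamma (ν / 2)) *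
    (1 + z ^ 2 / ν) ^ (-((ν + 1) / 2))

open Set

lemma betaRealAux {p q : ℝ} (hp : 0 < p) (hq : 0 < q) :
    ∫ u in Ioo (0:ℝ) 1, u ^ (p-1) * (1-u) ^ (q-1)
      = Real.Gamma p * Real.Gamma q / Real.Gamma (p+q) := by
  have key := Complex.Gamma_mul_Gamma_eq_betaIntegral
    (s := (p:ℂ)) (t := (q:ℂ)) (by simpa using hp) (by simpa using hq)
  have hbeta : Complex.betaIntegral p q
      = ((∫ u in Ioo (0:ℝ) 1, u ^ (p-1) * (1-u) ^ (q-1) : ℝ) : ℂ) := by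
    rw [Complex.betaIntegral, intervalIntegral.integral_of_le zero_le_one,
      integral_Ioc_eq_integral_Ioo]
    have h1 : ∀ x ∈ Ioo (0:ℝ) 1, (x:ℂ) ^ ((p:ℂ)-1) * (1-(x:ℂ)) ^ ((q:ℂ)-1)
        = ((x ^ (p-1) * (1-x) ^ (q-1) : ℝ) : ℂ) := by
      intro x hx
      have hx0 : (0:ℝ) ≤ x := le_of_lt hx.1
      have hx1 : (0:ℝ) ≤ 1 - x := by linarith [hx.2]
      push_cast
      rw [Complex.ofReal_cpow hx0, Complex.ofReal_cpow hx1]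
      push_cast
      ring
    rw [setIntegral_congr_fun measurableSet_Ioo h1]
    exact integral_ofReal
  rw [hbeta, ← Complex.ofReal_add, Complex.Gamma_ofReal, Complex.Gamma_ofReal,
    Complex.Gamma_ofReal, ← Complex.ofReal_mul, ← Complex.ofReal_mul] at key
  have h2 := Complex.ofReal_injective key
  have hG : Real.Gamma (p+q) ≠ 0 := (Real.Gamma_pos_of_pos (by linarith)).ne'
  field_simp
  linarith [h2]

lemma auxPt (ν s : ℝ) (hν : 0 < ν) (k : ℕ) (x : ℝ) (hx : 0 < x) :
    |2*ν*x/(ν+x^2)^2| * ((x^2/(ν+x^2)) ^ ((k:ℝ)+1/2-1) * (1 - x^2/(ν+x^2)) ^ (s-(k:ℝ)-1/2-1))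
    = 2/(Real.sqrt ν * ν^k) * (x^(2*k) * (1+x^2/ν)^(-s)) := by
  have hA : 0 < ν + x^2 := by positivity
  have h1 : 1 - x^2/(ν+x^2) = ν/(ν+x^2) := by field_simp; ring
  have h2 : 1 + x^2/ν = (ν+x^2)/ν := by field_simp
  have habs : |2*ν*x/(ν+x^2)^2| = 2*ν*x/(ν+x^2)^2 := abs_of_pos (by positivity)
  rw [habs, h1, h2]
  have e1 : (x^2/(ν+x^2)) ^ ((k:ℝ)+1/2-1)
      = Real.exp (((k:ℝ)+1/2-1) * (2*Real.log x - Real.log (ν+x^2))) := by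
    rw [Real.rpow_def_of_pos (by positivity), Real.log_div (by positivity) hA.ne',
      Real.log_pow]
    push_cast; ring_nf
  have e2 : (ν/(ν+x^2)) ^ (s-(k:ℝ)-1/2-1)
      = Real.exp ((s-(k:ℝ)-1/2-1) * (Real.log ν - Real.log (ν+x^2))) := by
    rw [Real.rpow_def_of_pos (by positivity), Real.log_div hν.ne' hA.ne']
    ring_nf
  have e3 : ((ν+x^2)/ν) ^ (-s)
      = Real.exp ((-s) * (Real.log (ν+x^2) - Real.log ν)) := by
    rw [Real.rpow_def_of_pos (by positivity), Real.log_div hA.ne' hν.ne']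
    ring_nf
  have e4 : x = Real.exp (Real.log x) := (Real.exp_log hx).symm
  have e5 : ν = Real.exp (Real.log ν) := (Real.exp_log hν).symm
  have e6 : (ν+x^2)^2 = Real.exp (2 * Real.log (ν+x^2)) := by
    rw [← Real.exp_log (show (0:ℝ) < (ν+x^2)^2 by positivity), Real.log_pow]
    push_cast; ring_nf
  have e7 : Real.sqrt ν = Real.exp (Real.log ν / 2) := by
    rw [← Real.exp_log (Real.sqrt_pos.mpr hν), Real.log_sqrt hν.le]
  have e8 : (ν:ℝ)^k = Real.exp (k * Real.log ν) := by
    rw [← Real.exp_log (show (0:ℝ) < ν^k by positivity), Real.log_pow]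
  have e9 : (x:ℝ)^(2*k) = Real.exp ((2*k) * Real.log x) := by
    rw [← Real.exp_log (show (0:ℝ) < x^(2*k) by positivity), Real.log_pow]
    push_cast; ring_nf
  rw [e1, e2, e3, e6, e7, e8, e9]
  rw [div_mul_eq_mul_div, div_mul_eq_mul_div, div_eq_div_iff (Real.exp_ne_zero _) (by positivity)]
  nth_rewrite 1 [e4]; nth_rewrite 1 [e5]
  simp only [← Real.exp_add]
  ring_nf
  simp only [← Real.exp_add]
  congr 1
  ring_nf

lemma Jlem (ν s : ℝ) (hν : 0 < ν) (k : ℕ) (hs : (k:ℝ) + 1/2 < s) :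
    ∫ x in Ioi (0:ℝ), x ^ (2*k) * (1 + x^2/ν) ^ (-s)
      = Real.sqrt ν * ν^k / 2 *
        (Real.Gamma ((k:ℝ) + 1/2) * Real.Gamma (s - (k:ℝ) - 1/2) / Real.Gamma s) := by
  set f : ℝ → ℝ := fun x => x^2/(ν+x^2) with hf
  have himg : f '' Ioi 0 = Ioo (0:ℝ) 1 := by
    ext u
    constructor
    · rintro ⟨x, hx, rfl⟩
      have hx : (0:ℝ) < x := hx
      have hA : 0 < ν + x^2 := by positivity
      constructor
      · positivity
      · rw [div_lt_one hA]; nlinarith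
    · rintro ⟨hu0, hu1⟩
      refine ⟨Real.sqrt (ν*u/(1-u)), ?_, ?_⟩
      · have : 0 < ν*u/(1-u) := by
          apply div_pos (by positivity) (by linarith)
        exact Real.sqrt_pos.mpr this
      · have h1u : (0:ℝ) < 1 - u := by linarith
        have hsq : Real.sqrt (ν*u/(1-u)) ^ 2 = ν*u/(1-u) :=
          Real.sq_sqrt (le_of_lt (div_pos (by positivity) h1u))
        simp only [hf, hsq]
        field_simp
        ring
  have hderiv : ∀ x ∈ Ioi (0:ℝ),
      HasDerivWithinAt f (2*ν*x/(ν+x^2)^2) (Ioi 0) x := by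
    intro x hx
    have hA : (ν + x^2) ≠ 0 := by positivity
    have : HasDerivAt f ((2*x*(ν+x^2) - x^2*(2*x))/(ν+x^2)^2) x := by
      simpa [hf, Pi.div_def] using (((hasDerivAt_pow 2 x)).div
        (((hasDerivAt_pow 2 x)).const_add ν) hA)
    have h2 : (2*x*(ν+x^2) - x^2*(2*x))/(ν+x^2)^2 = 2*ν*x/(ν+x^2)^2 := by
      congr 1; ring
    rw [h2] at this
    exact this.hasDerivWithinAt
  have hinj : InjOn f (Ioi 0) := by
    intro x hx y hy hxy
    have hx : (0:ℝ) < x := hx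
    have hy : (0:ℝ) < y := hy
    have hAx : (0:ℝ) < ν + x^2 := by positivity
    have hAy : (0:ℝ) < ν + y^2 := by positivity
    rw [hf] at hxy
    simp only at hxy
    rw [div_eq_div_iff hAx.ne' hAy.ne'] at hxy
    have hsq : x^2 = y^2 := by nlinarith
    nlinarith
  have hcov := integral_image_eq_integral_abs_deriv_smul measurableSet_Ioi hderiv hinj
    (fun u => u ^ ((k:ℝ)+1/2-1) * (1-u) ^ (s-(k:ℝ)-1/2-1))
  rw [himg] at hcov
  rw [betaRealAux (by positivity) (by linarith)] at hcov
  have hGs : ((k:ℝ)+1/2) + (s-(k:ℝ)-1/2) = s := by ring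
  rw [hGs] at hcov
  have hpt : ∀ x ∈ Ioi (0:ℝ),
      |2*ν*x/(ν+x^2)^2| • ((f x) ^ ((k:ℝ)+1/2-1) * (1-(f x)) ^ (s-(k:ℝ)-1/2-1))
      = 2/(Real.sqrt ν * ν^k) * (x^(2*k) * (1+x^2/ν)^(-s)) := by
    intro x hx
    have := auxPt ν s hν k x hx
    simpa [hf, smul_eq_mul] using this
  rw [setIntegral_congr_fun measurableSet_Ioi hpt, integral_const_mul] at hcov
  rw [hcov]
  have h1 : Real.sqrt ν ≠ 0 := (Real.sqrt_pos.mpr hν).ne'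
  have h2 : (ν:ℝ)^k ≠ 0 := by positivity
  field_simp

lemma fullLine (ν s : ℝ) (hν : 0 < ν) (k : ℕ) (hs : (k:ℝ) + 1/2 < s) :
    ∫ x : ℝ, x ^ (2*k) * (1 + x^2/ν) ^ (-s)
      = Real.sqrt ν * ν^k *
        (Real.Gamma ((k:ℝ) + 1/2) * Real.Gamma (s - (k:ℝ) - 1/2) / Real.Gamma s) := by
  have heq : (fun x : ℝ => x ^ (2*k) * (1 + x^2/ν) ^ (-s))
      = fun x : ℝ => (fun t : ℝ => t ^ (2*k) * (1 + t^2/ν) ^ (-s)) |x| := by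
    funext x
    simp only
    rw [pow_mul, pow_mul, sq_abs]
  rw [heq, integral_comp_abs (f := fun t : ℝ => t ^ (2*k) * (1 + t^2/ν) ^ (-s)), Jlem ν s hν k hs]
  ring

/-- For the standardized Student `t` density, the scale Fisher information integral
satisfies `∫ z² ((∂g/∂z)(z;ν))²/g(z;ν) dz + 2 ∫ z (∂g/∂z)(z;ν) dz + 1 = 2ν/(ν+3)`. -/
theorem stmt9 (ν : ℝ) (hν : 0 < ν) :
    (∫ z : ℝ, z ^ 2 * (deriv (fun w => studentPdf ν w) z) ^ 2 / studentPdf ν z) +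
        2 * (∫ z : ℝ, z * deriv (fun w => studentPdf ν w) z) + 1
      = 2 * ν / (ν + 3) := by
  set C : ℝ := Real.Gamma ((ν + 1) / 2) / (Real.sqrt (ν * Real.pi) * Real.Gamma (ν / 2))
    with hC
  have hπ := Real.pi_pos
  have hCpos : 0 < C := by
    rw [hC]
    apply div_pos (Real.Gamma_pos_of_pos (by linarith))
    exact mul_pos (Real.sqrt_pos.mpr (by positivity)) (Real.Gamma_pos_of_pos (by positivity))
  have hXpos : ∀ z : ℝ, (0:ℝ) < 1 + z^2/ν := fun z => by positivity
  have hd : ∀ z : ℝ, deriv (fun w => studentPdf ν w) z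
      = C * (-((ν+1)/2) * (1+z^2/ν) ^ (-((ν+1)/2)-1) * (2*z/ν)) := by
    intro z
    have hX := hXpos z
    have hbase : HasDerivAt (fun w : ℝ => 1 + w^2/ν) (2*z/ν) z := by
      simpa using ((hasDerivAt_pow 2 z).div_const ν).const_add 1
    have h := ((hbase.rpow_const (p := -((ν+1)/2)) (Or.inl hX.ne')).const_mul C)
    have heq : (fun w => studentPdf ν w) = fun w : ℝ => C * (1 + w^2/ν) ^ (-((ν+1)/2)) := by
      funext w; rw [studentPdf, hC]
    rw [heq]
    convert h.deriv using 1
    ring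
  have hpdf : ∀ z : ℝ, studentPdf ν z = C * (1+z^2/ν) ^ (-((ν+1)/2)) := by
    intro z; rw [studentPdf, hC]
  -- first integrand
  have Eq1 : ∀ z : ℝ, z ^ 2 * (deriv (fun w => studentPdf ν w) z) ^ 2 / studentPdf ν z
      = (C * ((ν+1)/ν)^2) * (z^(2*2) * (1+z^2/ν) ^ (-((ν+1)/2+2))) := by
    intro z
    have hX := hXpos z
    rw [hd z, hpdf z]
    set X := 1 + z^2/ν with hXdef
    rw [div_eq_iff (mul_pos hCpos (Real.rpow_pos_of_pos hX _)).ne']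
    set Y := X ^ (-((ν+1)/2)-1) with hY
    set Z := X ^ (-((ν+1)/2)) with hZ
    set W := X ^ (-((ν+1)/2+2)) with hW
    have key : Y * Y = W * Z := by
      rw [hY, hZ, hW, ← Real.rpow_add hX, ← Real.rpow_add hX]
      congr 1; ring
    have hν' : (ν:ℝ) ≠ 0 := hν.ne'
    have e : z ^ 2 * (C * (-((ν+1)/2) * Y * (2*z/ν))) ^ 2
        = C^2*(ν+1)^2*z^4/ν^2*(Y*Y) := by ring
    rw [e, key]
    ring
  have Eq2 : ∀ z : ℝ, z * deriv (fun w => studentPdf ν w) z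
      = (-(C * (ν+1)/ν)) * (z^(2*1) * (1+z^2/ν) ^ (-((ν+1)/2+1))) := by
    intro z
    rw [hd z]
    set X := 1 + z^2/ν with hXdef
    have hrw : -((ν+1)/2+1) = -((ν+1)/2)-1 := by ring
    rw [hrw]
    have hν' : (ν:ℝ) ≠ 0 := hν.ne'
    field_simp
    ring
  rw [integral_congr_ae (Filter.Eventually.of_forall Eq1),
    integral_congr_ae (Filter.Eventually.of_forall Eq2),
    integral_const_mul, integral_const_mul]
  rw [fullLine ν ((ν+1)/2+2) hν 2 (by push_cast; linarith),
    fullLine ν ((ν+1)/2+1) hν 1 (by push_cast; linarith)]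
  have harg1 : (ν+1)/2 + 2 - ((2:ℕ):ℝ) - 1/2 = ν/2 := by push_cast; ring
  have harg2 : (ν+1)/2 + 1 - ((1:ℕ):ℝ) - 1/2 = ν/2 := by push_cast; ring
  rw [harg1, harg2]
  have hG12 : Real.Gamma (1/2 : ℝ) = Real.sqrt Real.pi := Real.Gamma_one_half_eq
  have hG32 : Real.Gamma (((1:ℕ):ℝ) + 1/2) = Real.sqrt Real.pi / 2 := by
    rw [show (((1:ℕ):ℝ) + 1/2) = 1/2 + 1 by push_cast; ring, Real.Gamma_add_one (by norm_num),
      hG12]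
    ring
  have hG52 : Real.Gamma (((2:ℕ):ℝ) + 1/2) = 3/4 * Real.sqrt Real.pi := by
    rw [show (((2:ℕ):ℝ) + 1/2) = (1/2 + 1) + 1 by push_cast; ring,
      Real.Gamma_add_one (by norm_num), Real.Gamma_add_one (by norm_num), hG12]
    ring
  have hGa1 : Real.Gamma ((ν+1)/2 + 1) = (ν+1)/2 * Real.Gamma ((ν+1)/2) :=
    Real.Gamma_add_one (show ((ν+1)/2 : ℝ) ≠ 0 by positivity)
  have hGa2 : Real.Gamma ((ν+1)/2 + 2) = ((ν+1)/2+1) * ((ν+1)/2 * Real.Gamma ((ν+1)/2)) := by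
    rw [show (ν+1)/2 + 2 = ((ν+1)/2 + 1) + 1 by ring,
      Real.Gamma_add_one (show ((ν+1)/2 + 1 : ℝ) ≠ 0 by positivity), hGa1]
  rw [hG32, hG52, hGa1, hGa2]
  have hsqrtνπ : Real.sqrt (ν * Real.pi) = Real.sqrt ν * Real.sqrt Real.pi :=
    Real.sqrt_mul hν.le _
  have hGapos : 0 < Real.Gamma ((ν+1)/2) := Real.Gamma_pos_of_pos (by positivity)
  have hGν2pos : 0 < Real.Gamma (ν/2) := Real.Gamma_pos_of_pos (by positivity)
  have hsπ : 0 < Real.sqrt Real.pi := Real.sqrt_pos.mpr hπ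
  have hsν : 0 < Real.sqrt ν := Real.sqrt_pos.mpr hν
  rw [hC, hsqrtνπ]
  have hν3 : ν + 3 ≠ 0 := by linarith
  field_simp
  ring
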